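/- Assume b_p, n_p > 0 for p ∈ {1,…,P}, and assume the family k ↦ ∏_{p=1}^P (1 + b_p·K_p(k))^(−n_p) is summable over k ∈ ℕ^M. Then ∫_{(0,∞)^P} [∏_{m=1}^M e^(−y_m·(X_m·β)) / (1 + e^(−(X_m·β)))] · ∏_{p=1}^P G(β_p; b_p, n_p) dβ = Σ_{k ∈ ℕ^M} (−1)^{|k|} · ∏_{p=1}^P (1 + b_p·K_p(k))^(−n_p). -/

import Mathlib

open MeasureTheory

/-- The Gamma density with scale `b` and shape `n`:
`G(z; b, n) = (1/(b·Γ(n)))·(z/b)^(n−1)·e^(−z/b)` for `z > 0`, and `0` for `z ≤ 0`. -/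
noncomputable def gammaDensity (b n z : ℝ) : ℝ :=
  if 0 < z then 1 / (b * Real.Gamma n) * (z / b) ^ (n - 1) * Real.exp (-(z / b)) else 0

/-- `K_p(k) = Σ_m (y_m + k_m)·x_{m,p}` -/
noncomputable def Kcoef {M P : ℕ} (x : Fin M → Fin P → ℝ) (y : Fin M → ℝ)
    (k : Fin M → ℕ) (p : Fin P) : ℝ :=
  ∑ m, (y m + k m) * x m p


lemma gammaDensity_nonneg {b n : ℝ} (hb : 0 < b) (hn : 0 < n) (z : ℝ) :
    0 ≤ gammaDensity b n z := by
  unfold gammaDensity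
  split_ifs with h
  · have := Real.Gamma_pos_of_pos hn
    positivity
  · exact le_rfl

lemma measurable_gammaDensity (b n : ℝ) : Measurable (gammaDensity b n) := by
  unfold gammaDensity
  apply Measurable.ite (show MeasurableSet {z : ℝ | 0 < z} from measurableSet_Ioi)
  · fun_prop
  · fun_prop

lemma gammaDensity_eq_zero {b n z : ℝ} (h : ¬ 0 < z) : gammaDensity b n z = 0 :=
  if_neg h

lemma key_pointwise {b n K : ℝ} (hb : 0 < b) {z : ℝ} (hz : 0 < z) :
    Real.exp (-(K * z)) * gammaDensity b n z
      = (1 / (b * Real.Gamma n) * (1 / b) ^ (n - 1)) *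
        (z ^ (n - 1) * Real.exp (-((K + 1 / b) * z))) := by
  rw [gammaDensity, if_pos hz, div_eq_mul_one_div z b,
    Real.mul_rpow hz.le (by positivity),
    show -((K + 1/b) * z) = -(K * z) + -(z * (1/b)) by ring, Real.exp_add]
  ring

lemma integrable_exp_mul_gammaDensity {b n K : ℝ} (hb : 0 < b) (hn : 0 < n) (hK : 0 ≤ K) :
    Integrable (fun z => Real.exp (-(K * z)) * gammaDensity b n z) := by
  rw [← integrableOn_iff_integrable_of_support_subset (s := Set.Ioi (0:ℝ))
    (by
      intro z hz
      simp only [Function.mem_support] at hz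
      by_contra hzz
      exact hz (by rw [gammaDensity_eq_zero (by simpa using hzz), mul_zero]))]
  have h2 : IntegrableOn (fun z : ℝ => z ^ (n-1) * Real.exp (-(K + 1/b) * z ^ (1:ℝ)))
      (Set.Ioi 0) :=
    integrableOn_rpow_mul_exp_neg_mul_rpow (by linarith) zero_lt_one (by positivity)
  have h : IntegrableOn
      (fun z : ℝ => (1 / (b * Real.Gamma n) * (1 / b) ^ (n - 1)) *
        (z ^ (n - 1) * Real.exp (-((K + 1 / b) * z)))) (Set.Ioi 0) := by
    refine ((h2.congr_fun (fun z hz => ?_) measurableSet_Ioi)).const_mul _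
    rw [Real.rpow_one]
    ring_nf
  exact h.congr_fun (fun z hz => (key_pointwise hb hz).symm) measurableSet_Ioi

lemma integral_exp_mul_gammaDensity {b n K : ℝ} (hb : 0 < b) (hn : 0 < n) (hK : 0 ≤ K) :
    ∫ z, Real.exp (-(K * z)) * gammaDensity b n z = (1 + b * K) ^ (-n) := by
  have hr : 0 < K + 1/b := by positivity
  have hΓ := Real.Gamma_pos_of_pos hn
  have hbK : 0 < 1 + b * K := by positivity
  rw [← setIntegral_eq_integral_of_forall_compl_eq_zero
    (s := Set.Ioi (0:ℝ)) (fun z hz => by rw [gammaDensity_eq_zero (by simpa using hz), mul_zero])]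
  rw [setIntegral_congr_fun measurableSet_Ioi (fun z hz => key_pointwise hb hz),
    integral_const_mul, Real.integral_rpow_mul_exp_neg_mul_Ioi hn hr]
  have e1 : (1/b:ℝ)^(n-1) = (1/b)^n * b := by
    rw [Real.rpow_sub (by positivity), Real.rpow_one]; field_simp
  have e2 : (1/b:ℝ)^n * (1/(K+1/b))^n = (1+b*K)^(-n) := by
    rw [← Real.mul_rpow (by positivity) (by positivity),
      show (1/b : ℝ) * (1/(K+1/b)) = (1+b*K)⁻¹ by field_simp; ring,
      Real.inv_rpow hbK.le, ← Real.rpow_neg hbK.le]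
  rw [e1, ← e2]
  field_simp

lemma hasSum_logit {u : ℝ} (ya : ℝ) (hu : 0 < u) :
    HasSum (fun k : ℕ => (-1:ℝ)^k * Real.exp (-((ya + k) * u)))
      (Real.exp (-(ya * u)) / (1 + Real.exp (-u))) := by
  have hlt : ‖-Real.exp (-u)‖ < 1 := by
    rw [norm_neg, Real.norm_eq_abs, abs_of_pos (Real.exp_pos _)]
    exact Real.exp_lt_one_iff.2 (by linarith)
  have h := (hasSum_geometric_of_norm_lt_one hlt).mul_left (Real.exp (-(ya * u)))
  have heq : (fun k : ℕ => Real.exp (-(ya * u)) * (-Real.exp (-u)) ^ k)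
      = fun k : ℕ => (-1:ℝ)^k * Real.exp (-((ya + k) * u)) := by
    funext k
    rw [neg_pow, show -((ya + (k:ℝ)) * u) = -(ya * u) + (k:ℝ) * (-u) by ring,
      Real.exp_add, Real.exp_nat_mul]
    ring
  rw [heq] at h
  rw [sub_neg_eq_add, ← div_eq_mul_inv] at h
  exact h

lemma summable_norm_logit {u : ℝ} (ya : ℝ) (hu : 0 < u) :
    Summable (fun k : ℕ => ‖(-1:ℝ)^k * Real.exp (-((ya + k) * u))‖) := by
  have h : Summable (fun k : ℕ => Real.exp (-(ya * u)) * Real.exp (-u) ^ k) := by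
    refine Summable.mul_left _ (summable_geometric_of_lt_one (Real.exp_nonneg _) ?_)
    exact Real.exp_lt_one_iff.2 (by linarith)
  refine h.congr fun k => ?_
  rw [norm_mul, norm_pow, norm_neg, norm_one, one_pow, one_mul, Real.norm_eq_abs,
    abs_of_pos (Real.exp_pos _),
    show -((ya + (k:ℝ)) * u) = -(ya * u) + (k:ℝ) * (-u) by ring,
    Real.exp_add, Real.exp_nat_mul]

lemma pi_tsum_prod : ∀ {M : ℕ} (f : Fin M → ℕ → ℝ), (∀ i, Summable fun j => ‖f i j‖) →
    (Summable fun k : Fin M → ℕ => ‖∏ i, f i (k i)‖) ∧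
    (∏ i, ∑' j, f i j) = ∑' k : Fin M → ℕ, ∏ i, f i (k i) := by
  intro M
  induction M with
  | zero =>
    intro f hf
    haveI : Unique (Fin 0 → ℕ) := ⟨⟨fun i => i.elim0⟩, fun _ => funext fun i => i.elim0⟩
    constructor
    · exact Summable.of_finite
    · simp only [Finset.univ_eq_empty, Finset.prod_empty]
      rw [tsum_eq_single (default : Fin 0 → ℕ) (fun b hb => (hb (funext fun i => i.elim0)).elim)]
  | succ M ih =>
    intro f hf
    obtain ⟨hs, he⟩ := ih (fun i => f i.succ) (fun i => hf i.succ)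
    have h0 := hf 0
    set F : ℕ → ℝ := f 0 with hF
    set G : (Fin M → ℕ) → ℝ := fun t => ∏ i, f i.succ (t i) with hG
    have hs' : Summable fun k : Fin M → ℕ => ‖G k‖ := hs
    have hmul : Summable (fun z : ℕ × (Fin M → ℕ) => ‖F z.1 * G z.2‖) :=
      Summable.mul_norm h0 hs'
    set e := Fin.consEquiv (fun _ : Fin (M+1) => ℕ) with he_def
    have hcomp : ∀ z : ℕ × (Fin M → ℕ),
        (∏ i, f i ((e z) i)) = F z.1 * G z.2 := by
      intro z
      rw [Fin.prod_univ_succ]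
      simp [he_def, Fin.consEquiv, hF, hG]
    constructor
    · rw [← e.summable_iff]
      refine hmul.congr fun z => ?_
      simp only [Function.comp_apply, hcomp z]
    · rw [Fin.prod_univ_succ, he, tsum_mul_tsum_of_summable_norm h0 hs', ← e.tsum_eq]
      exact tsum_congr fun z => (hcomp z).symm

/-- Closed-form series expansion of the marginalized logit likelihood against a product of
independent Gamma priors (Theorem 1 of the paper, for one household). -/
theorem integral_logit_gamma_eq_tsum (M P : ℕ) (hM : 1 ≤ M) (hP : 1 ≤ P)
    (x : Fin M → Fin P → ℝ) (hx : ∀ m p, 0 ≤ x m p) (hx' : ∀ m, ∃ p, 0 < x m p)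
    (y : Fin M → ℝ) (hy : ∀ m, y m = 0 ∨ y m = 1)
    (b n : Fin P → ℝ) (hb : ∀ p, 0 < b p) (hn : ∀ p, 0 < n p)
    (hsum : Summable fun k : Fin M → ℕ => ∏ p, (1 + b p * Kcoef x y k p) ^ (-(n p))) :
    ∫ β in Set.univ.pi (fun _ : Fin P => Set.Ioi (0 : ℝ)),
        (∏ m, Real.exp (-(y m * ∑ p, x m p * β p)) /
            (1 + Real.exp (-(∑ p, x m p * β p)))) *
          ∏ p, gammaDensity (b p) (n p) (β p)
      = ∑' k : Fin M → ℕ,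
          (-1 : ℝ) ^ (∑ m, k m) * ∏ p, (1 + b p * Kcoef x y k p) ^ (-(n p)) := by
  classical
  have hy0 : ∀ m, 0 ≤ y m := fun m => by rcases hy m with h | h <;> rw [h] <;> norm_num
  have hKnn : ∀ (k : Fin M → ℕ) (p : Fin P), 0 ≤ Kcoef x y k p := fun k p =>
    Finset.sum_nonneg fun m _ =>
      mul_nonneg (add_nonneg (hy0 m) (Nat.cast_nonneg _)) (hx m p)
  set F : (Fin M → ℕ) → (Fin P → ℝ) → ℝ := fun k β =>
    (-1:ℝ) ^ (∑ m, k m) *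
      ∏ p, (Real.exp (-(Kcoef x y k p * β p)) * gammaDensity (b p) (n p) (β p)) with hF
  -- pointwise identity
  have hpt : ∀ β : Fin P → ℝ,
      (∏ m, Real.exp (-(y m * ∑ p, x m p * β p)) /
          (1 + Real.exp (-(∑ p, x m p * β p)))) *
        ∏ p, gammaDensity (b p) (n p) (β p) = ∑' k, F k β := by
    intro β
    by_cases hβ : ∀ p, 0 < β p
    · have hu : ∀ m, 0 < ∑ p, x m p * β p := fun m => by
        obtain ⟨p0, hp0⟩ := hx' m
        exact Finset.sum_pos' (fun p _ => mul_nonneg (hx m p) (hβ p).le)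
          ⟨p0, Finset.mem_univ p0, mul_pos hp0 (hβ p0)⟩
      set f : Fin M → ℕ → ℝ := fun m j =>
        (-1:ℝ)^j * Real.exp (-((y m + j) * ∑ p, x m p * β p)) with hf
      have hfs : ∀ m, Summable fun j => ‖f m j‖ := fun m => summable_norm_logit (y m) (hu m)
      have h1 : ∀ m, Real.exp (-(y m * ∑ p, x m p * β p)) /
          (1 + Real.exp (-(∑ p, x m p * β p))) = ∑' j, f m j := fun m =>
        (hasSum_logit (y m) (hu m)).tsum_eq.symm
      have hswap : ∀ k : Fin M → ℕ,
          ∑ m, -((y m + (k m : ℝ)) * ∑ p, x m p * β p)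
            = ∑ p, -(Kcoef x y k p * β p) := by
        intro k
        rw [Finset.sum_neg_distrib, Finset.sum_neg_distrib]
        congr 1
        simp_rw [Finset.mul_sum]
        rw [Finset.sum_comm]
        refine Finset.sum_congr rfl fun p _ => ?_
        rw [Kcoef, Finset.sum_mul]
        exact Finset.sum_congr rfl fun m _ => by ring
      calc (∏ m, Real.exp (-(y m * ∑ p, x m p * β p)) /
              (1 + Real.exp (-(∑ p, x m p * β p)))) *
            ∏ p, gammaDensity (b p) (n p) (β p)
          = (∑' k : Fin M → ℕ, ∏ m, f m (k m)) * ∏ p, gammaDensity (b p) (n p) (β p) := by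
            rw [Finset.prod_congr rfl fun m _ => h1 m, (pi_tsum_prod f hfs).2]
        _ = ∑' k : Fin M → ℕ, (∏ m, f m (k m)) * ∏ p, gammaDensity (b p) (n p) (β p) :=
            (tsum_mul_right).symm
        _ = ∑' k, F k β := by
            refine tsum_congr fun k => ?_
            rw [hf, hF]
            simp only []
            rw [Finset.prod_mul_distrib, Finset.prod_pow_eq_pow_sum, ← Real.exp_sum,
              hswap k, Real.exp_sum, mul_assoc, ← Finset.prod_mul_distrib]
    · push_neg at hβ
      obtain ⟨q, hq⟩ := hβ
      have hGq : gammaDensity (b q) (n q) (β q) = 0 := gammaDensity_eq_zero (not_lt.2 hq)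
      rw [Finset.prod_eq_zero (Finset.mem_univ q) hGq, mul_zero]
      refine (tsum_congr fun k => ?_).trans tsum_zero |>.symm
      rw [hF]
      simp only []
      rw [Finset.prod_eq_zero (Finset.mem_univ q) (by rw [hGq, mul_zero]), mul_zero]
  have hmeas : ∀ k : Fin M → ℕ, AEStronglyMeasurable (F k) (volume : Measure (Fin P → ℝ)) := by
    intro k
    refine Measurable.aestronglyMeasurable ?_
    rw [hF]
    refine Measurable.const_mul ?_ _
    refine Finset.measurable_prod _ fun p _ => ?_
    exact (Real.measurable_exp.comp ((measurable_pi_apply p).const_mul _).neg).mul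
      ((measurable_gammaDensity _ _).comp (measurable_pi_apply p))
  have hint : ∀ k : Fin M → ℕ, Integrable (F k) := by
    intro k
    rw [hF]
    exact (Integrable.fintype_prod
      (f := fun p z => Real.exp (-(Kcoef x y k p * z)) * gammaDensity (b p) (n p) z)
      (fun p => integrable_exp_mul_gammaDensity (hb p) (hn p) (hKnn k p))).const_mul _
  have hterm : ∀ k : Fin M → ℕ, ∫ β, F k β
      = (-1:ℝ)^(∑ m, k m) * ∏ p, (1 + b p * Kcoef x y k p) ^ (-(n p)) := by
    intro k
    rw [hF]
    simp only []
    rw [integral_const_mul, integral_fintype_prod_volume_eq_prod (ι := Fin P)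
      (f := fun p z => Real.exp (-(Kcoef x y k p * z)) * gammaDensity (b p) (n p) z)]
    exact congrArg _ (Finset.prod_congr rfl fun p _ =>
      integral_exp_mul_gammaDensity (hb p) (hn p) (hKnn k p))
  have hnonneg : ∀ (k : Fin M → ℕ) (β : Fin P → ℝ),
      0 ≤ ∏ p, Real.exp (-(Kcoef x y k p * β p)) * gammaDensity (b p) (n p) (β p) :=
    fun k β => Finset.prod_nonneg fun p _ =>
      mul_nonneg (Real.exp_nonneg _) (gammaDensity_nonneg (hb p) (hn p) _)
  have hnorm : ∀ (k : Fin M → ℕ) (β : Fin P → ℝ), ‖F k β‖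
      = ∏ p, Real.exp (-(Kcoef x y k p * β p)) * gammaDensity (b p) (n p) (β p) := by
    intro k β
    rw [hF]
    simp only []
    rw [norm_mul, norm_pow, norm_neg, norm_one, one_pow, one_mul, Real.norm_eq_abs,
      abs_of_nonneg (hnonneg k β)]
  have hnormint : ∀ k : Fin M → ℕ,
      ∫ β, ‖F k β‖ = ∏ p, (1 + b p * Kcoef x y k p) ^ (-(n p)) := by
    intro k
    simp only [hnorm]
    rw [integral_fintype_prod_volume_eq_prod (ι := Fin P)
      (f := fun p z => Real.exp (-(Kcoef x y k p * z)) * gammaDensity (b p) (n p) z)]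
    exact Finset.prod_congr rfl fun p _ =>
      integral_exp_mul_gammaDensity (hb p) (hn p) (hKnn k p)
  have hpos : ∀ k : Fin M → ℕ, 0 ≤ ∏ p, (1 + b p * Kcoef x y k p) ^ (-(n p)) := fun k =>
    Finset.prod_nonneg fun p _ => Real.rpow_nonneg
      (by have := hKnn k p; have := (hb p).le; positivity) _
  have hlint : ∑' k : Fin M → ℕ, ∫⁻ β, (‖F k β‖₊ : ENNReal) ≠ ⊤ := by
    have h1 : ∀ k : Fin M → ℕ, ∫⁻ β, (‖F k β‖₊ : ENNReal)
        = ENNReal.ofReal (∏ p, (1 + b p * Kcoef x y k p) ^ (-(n p))) := fun k => by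
      change ∫⁻ β, ‖F k β‖ₑ = _
      rw [← ofReal_integral_norm_eq_lintegral_enorm (hint k), hnormint k]
    rw [tsum_congr h1, ← ENNReal.ofReal_tsum_of_nonneg hpos hsum]
    exact ENNReal.ofReal_ne_top
  have hcompl : ∀ β : Fin P → ℝ, β ∉ Set.univ.pi (fun _ : Fin P => Set.Ioi (0:ℝ)) →
      (∏ m, Real.exp (-(y m * ∑ p, x m p * β p)) /
          (1 + Real.exp (-(∑ p, x m p * β p)))) *
        ∏ p, gammaDensity (b p) (n p) (β p) = 0 := by
    intro β hβ
    simp only [Set.mem_univ_pi, Set.mem_Ioi] at hβ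
    push_neg at hβ
    obtain ⟨q, hq⟩ := hβ
    rw [Finset.prod_eq_zero (Finset.mem_univ q) (gammaDensity_eq_zero (not_lt.2 hq)), mul_zero]
  rw [setIntegral_eq_integral_of_forall_compl_eq_zero hcompl]
  simp only [hpt]
  rw [integral_tsum hmeas hlint]
  exact tsum_congr hterm
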